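/- With W′, Z_1′, …, Z_{N+1}′ defined by the homogeneous formulas of degree N+3 below, one has W′ ≠ 0, and the inhomogeneous ratios z_i := Z_i/W and z_i′ := Z_i′/W′ satisfy z_i′ z_i = z_{i−1}′ z_{i+1} + 1 for i = 1,…,N+1, with the conventions z_0′ := z_{N+1} and z_{N+2} := z_1′. The formulas are: W′ = W Z_1 ∏_{j=1}^{N+1} Z_j; for i = 1,…,N, Z_i′ = Z_1 (∏_{j=i+1}^{N+1} Z_j) ( Z_{N+1} ∏_{j=2}^{i+1} Z_j + W² S_i ); and Z_{N+1}′ = W² Z_1 ∏_{j=1}^{N} Z_j + ( Z_{N+1} ∏_{j=2}^{N+1} Z_j + W² S_N )( Z_{N+1} Z_2 + W² ), where S_1 := 1 and, for 2 ≤ i ≤ N, S_i := Σ_{k=1}^{i} ∏_{j ∈ {1,…,i+1} ∖ {k, k+1}} Z_j. -/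

import Mathlib

/-- `S_i`: `S_1 = 1` and, for `i ≥ 2`,
`S_i = ∑_{k=1}^{i} ∏_{j ∈ {1,…,i+1} ∖ {k,k+1}} Z_j`. -/
def Spoly {K : Type*} [Field K] (Z : ℕ → K) (i : ℕ) : K :=
  if i = 1 then 1
  else ∑ k ∈ Finset.Icc 1 i, ∏ j ∈ Finset.Icc 1 (i + 1) \ {k, k + 1}, Z j

/-- `W' = W Z_1 ∏_{j=1}^{N+1} Z_j`. -/
def Wnew {K : Type*} [Field K] (N : ℕ) (W : K) (Z : ℕ → K) : K :=
  W * Z 1 * ∏ j ∈ Finset.Icc 1 (N + 1), Z j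

/-- The homogeneous formulas of degree `N+3` for `Z_i'` (`1 ≤ i ≤ N`) and `Z_{N+1}'`. -/
def Znew {K : Type*} [Field K] (N : ℕ) (W : K) (Z : ℕ → K) (i : ℕ) : K :=
  if i = N + 1 then
    W ^ 2 * Z 1 * ∏ j ∈ Finset.Icc 1 N, Z j +
      (Z (N + 1) * ∏ j ∈ Finset.Icc 2 (N + 1), Z j + W ^ 2 * Spoly Z N) *
        (Z (N + 1) * Z 2 + W ^ 2)
  else
    Z 1 * (∏ j ∈ Finset.Icc (i + 1) (N + 1), Z j) *
      (Z (N + 1) * ∏ j ∈ Finset.Icc 2 (i + 1), Z j + W ^ 2 * Spoly Z i)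

lemma prod_Icc_split {K : Type*} [CommMonoid K] (f : ℕ → K) {a m b : ℕ}
    (h1 : a ≤ m + 1) (h2 : m ≤ b) :
    ∏ j ∈ Finset.Icc a b, f j =
      (∏ j ∈ Finset.Icc a m, f j) * ∏ j ∈ Finset.Icc (m + 1) b, f j := by
  rw [← Finset.Ico_add_one_right_eq_Icc, ← Finset.Ico_add_one_right_eq_Icc a m, ← Finset.Ico_add_one_right_eq_Icc (m+1)]
  exact (Finset.prod_Ico_consecutive f h1 (by omega)).symm

lemma Spoly_sum {K : Type*} [Field K] (Z : ℕ → K) {i : ℕ} (hi : 1 ≤ i) :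
    Spoly Z i = ∑ k ∈ Finset.Icc 1 i, ∏ j ∈ Finset.Icc 1 (i + 1) \ {k, k + 1}, Z j := by
  unfold Spoly
  split_ifs with h
  · subst h
    have : Finset.Icc 1 2 \ ({1, 2} : Finset ℕ) = ∅ := by decide
    simp [this]
  · rfl

lemma Spoly_rec {K : Type*} [Field K] (Z : ℕ → K) {i : ℕ} (hi : 2 ≤ i) :
    Spoly Z i * Z i = Spoly Z (i - 1) * Z i * Z (i + 1) + ∏ j ∈ Finset.Icc 1 i, Z j := by
  obtain ⟨n, rfl⟩ : ∃ n, i = n + 1 := ⟨i - 1, by omega⟩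
  rw [Spoly_sum Z (by omega), Spoly_sum Z (show 1 ≤ n + 1 - 1 by omega)]
  simp only [Nat.add_sub_cancel]
  rw [Finset.sum_Icc_succ_top (by omega : 1 ≤ n + 1)]
  have hlast : Finset.Icc 1 (n + 1 + 1) \ {n + 1, n + 1 + 1} = Finset.Icc 1 n := by
    ext x; simp only [Finset.mem_sdiff, Finset.mem_Icc, Finset.mem_insert,
      Finset.mem_singleton]; omega
  rw [hlast, add_mul, Finset.sum_mul, Finset.sum_mul, Finset.sum_mul]
  congr 1
  · apply Finset.sum_congr rfl
    intro k hk
    simp only [Finset.mem_Icc] at hk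
    have hset : Finset.Icc 1 (n + 1 + 1) \ {k, k + 1}
        = insert (n + 1 + 1) (Finset.Icc 1 (n + 1) \ {k, k + 1}) := by
      ext x; simp only [Finset.mem_sdiff, Finset.mem_Icc, Finset.mem_insert,
        Finset.mem_singleton]; omega
    rw [hset, Finset.prod_insert (by
      simp only [Finset.mem_sdiff, Finset.mem_Icc, Finset.mem_insert,
        Finset.mem_singleton]; omega)]
    ring
  · rw [Finset.prod_Icc_succ_top (by omega : 1 ≤ n + 1)]

theorem stmt17 {K : Type*} [Field K] (N : ℕ) (hN : 2 ≤ N) (W : K) (Z : ℕ → K)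
    (hW : W ≠ 0) (hZ : ∀ i, 1 ≤ i → i ≤ N + 1 → Z i ≠ 0) :
    Wnew N W Z ≠ 0 ∧
    Znew N W Z 1 / Wnew N W Z * (Z 1 / W) = Z (N + 1) / W * (Z 2 / W) + 1 ∧
    (∀ i, 2 ≤ i → i ≤ N →
      Znew N W Z i / Wnew N W Z * (Z i / W) =
        Znew N W Z (i - 1) / Wnew N W Z * (Z (i + 1) / W) + 1) ∧
    Znew N W Z (N + 1) / Wnew N W Z * (Z (N + 1) / W) =
      Znew N W Z N / Wnew N W Z * (Znew N W Z 1 / Wnew N W Z) + 1 := by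
  have hP : ∀ a b : ℕ, 1 ≤ a → b ≤ N + 1 → (∏ j ∈ Finset.Icc a b, Z j) ≠ 0 := by
    intro a b ha hb
    refine Finset.prod_ne_zero_iff.mpr fun j hj => ?_
    simp only [Finset.mem_Icc] at hj
    exact hZ j (by omega) (by omega)
  refine ⟨?_, ?_, ?_, ?_⟩
  · exact mul_ne_zero (mul_ne_zero hW (hZ 1 (by omega) (by omega)))
      (hP 1 (N + 1) (by omega) (by omega))
  · have e1 : Znew N W Z 1 = Z 1 * (∏ j ∈ Finset.Icc 2 (N + 1), Z j) *
        (Z (N + 1) * Z 2 + W ^ 2) := by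
      rw [Znew, if_neg (by omega), Spoly, if_pos rfl]
      norm_num [Finset.Icc_self]
    have e2 : Wnew N W Z = W * Z 1 * (Z 1 * ∏ j ∈ Finset.Icc 2 (N + 1), Z j) := by
      rw [Wnew, prod_Icc_split Z (by omega : 1 ≤ 1 + 1) (by omega : 1 ≤ N + 1),
        Finset.Icc_self, Finset.prod_singleton]
    rw [e1, e2]
    have h1 := hZ 1 (by omega) (by omega)
    have h2 := hP 2 (N+1) (by omega) (by omega)
    field_simp
  · intro i hi2 hiN
    have hsub : i - 1 + 1 = i := by omega
    have hrec := Spoly_rec Z hi2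
    -- notation
    set a := Z 1 with ha
    set b := Z i with hb
    set c := Z (i + 1) with hc
    set p := ∏ j ∈ Finset.Icc 2 i, Z j with hp
    set q := ∏ j ∈ Finset.Icc (i + 1) (N + 1), Z j with hq
    set s := Spoly Z i with hs
    set t := Spoly Z (i - 1) with ht
    have e1 : Znew N W Z i = a * q * (Z (N + 1) * (p * c) + W ^ 2 * s) := by
      rw [Znew, if_neg (by omega),
        prod_Icc_split Z (by omega : 2 ≤ i + 1) (by omega : i ≤ i + 1),
        Finset.Icc_self, Finset.prod_singleton]
    have e2 : Znew N W Z (i - 1) = a * (b * q) * (Z (N + 1) * p + W ^ 2 * t) := by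
      rw [Znew, if_neg (by omega), hsub,
        prod_Icc_split Z (by omega : i ≤ i + 1) (by omega : i ≤ N + 1),
        Finset.Icc_self, Finset.prod_singleton]
    have e3 : Wnew N W Z = W * a * (a * p * q) := by
      rw [Wnew, prod_Icc_split Z (by omega : 1 ≤ i + 1) (by omega : i ≤ N + 1),
        prod_Icc_split Z (by omega : 1 ≤ 1 + 1) (by omega : 1 ≤ i),
        Finset.Icc_self, Finset.prod_singleton, mul_assoc]
    have recp : s * b = t * b * c + a * p := by
      rw [hs, hb, ht, hc, hp, ha]
      rw [hrec, prod_Icc_split Z (by omega : 1 ≤ 1 + 1) (by omega : 1 ≤ i),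
        Finset.Icc_self, Finset.prod_singleton]
    have ha0 : a ≠ 0 := hZ 1 (by omega) (by omega)
    have hb0 : b ≠ 0 := hZ i (by omega) (by omega)
    have hp0 : p ≠ 0 := hP 2 i (by omega) (by omega)
    have hq0 : q ≠ 0 := hP (i+1) (N+1) (by omega) (by omega)
    rw [e1, e2, e3]
    have hD : W * a * (a * p * q) * W ≠ 0 := by
      exact mul_ne_zero (mul_ne_zero (mul_ne_zero hW ha0)
        (mul_ne_zero (mul_ne_zero ha0 hp0) hq0)) hW
    field_simp
    linear_combination (W ^ 2) * recp
  · set a := Z 1 with ha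
    set b := Z 2 with hb
    set d := Z (N + 1) with hd
    set r := ∏ j ∈ Finset.Icc 2 (N + 1), Z j with hr
    set m := ∏ j ∈ Finset.Icc 1 N, Z j with hm
    set s := Spoly Z N with hs
    have e4 : Znew N W Z (N + 1)
        = W ^ 2 * a * m + (d * r + W ^ 2 * s) * (d * b + W ^ 2) := by
      rw [Znew, if_pos rfl]
    have e5 : Znew N W Z N = a * d * (d * r + W ^ 2 * s) := by
      rw [Znew, if_neg (by omega), Finset.Icc_self, Finset.prod_singleton]
    have e6 : Znew N W Z 1 = a * r * (d * b + W ^ 2) := by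
      rw [Znew, if_neg (by omega), Spoly, if_pos rfl,
        Finset.Icc_self, Finset.prod_singleton, mul_one]
    have e7 : Wnew N W Z = W * a * (m * d) := by
      rw [Wnew, Finset.prod_Icc_succ_top (by omega : 1 ≤ N + 1)]
    have hrel : m * d = a * r := by
      rw [hm, hd, ha, hr, ← Finset.prod_Icc_succ_top (by omega : 1 ≤ N + 1),
        prod_Icc_split Z (by omega : 1 ≤ 1 + 1) (by omega : 1 ≤ N + 1),
        Finset.Icc_self, Finset.prod_singleton]
    have ha0 : a ≠ 0 := hZ 1 (by omega) (by omega)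
    have hd0 : d ≠ 0 := hZ (N + 1) (by omega) (by omega)
    have hm0 : m ≠ 0 := hP 1 N (by omega) (by omega)
    have hr0 : r ≠ 0 := hP 2 (N + 1) (by omega) (by omega)
    rw [e4, e5, e6, e7]
    field_simp
    linear_combination (W ^ 4 * s + d * W ^ 2 * r + d * W ^ 2 * s * b + d ^ 2 * r * b) * hrel
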